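/- Let z_i = w_i^(ε+1)(1-sτ)^ε, z̄ = ∫z_i di, and ĉ_i the consumption equivalent. Then the partial derivative of ĉ_i with respect to salience is ∂ĉ_i/∂s = (ετ²/(1-sτ))·[z_i(1-s) - z̄]. In particular, at s = 1 and τ > 0, ∂ĉ_i/∂s = -ετ²z̄/(1-τ) < 0 for every agent i, so a marginal reduction in salience at full salience (holding τ fixed) strictly increases every agent's consumption equivalent (a Pareto improvement). -/

import Mathlib

/-- With `zᵢ(s) = wᵢ^(ε+1)(1-sτ)^ε`, `z̄(s) = W̄(1-sτ)^ε`, and consumption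
equivalent `ĉᵢ(s) = zᵢ(1-τ) - vᵢ(zᵢ) + τ z̄`, one has
`∂ĉᵢ/∂s = (ετ²/(1-sτ))·[zᵢ(1-s) - z̄]`; at `s = 1` (with `0 < τ < 1`) this equals
`-ετ²z̄/(1-τ) < 0` for every agent, so reducing salience at full salience is a Pareto
improvement. -/
theorem stmt6 (ε τ : ℝ) (hε : 0 < ε) (hτ : 0 < τ)
    (wfun : ℝ → ℝ) (hw : ∀ i, 0 < wfun i) (hmono : Monotone wfun)
    (Wbar : ℝ) (hW : Wbar = ∫ j in (0:ℝ)..1, wfun j ^ (1 + ε))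
    (chat : ℝ → ℝ → ℝ)
    (hchat : ∀ i s, chat i s =
      (wfun i ^ (ε + 1) * (1 - s * τ) ^ ε) * (1 - τ)
        - ((wfun i ^ (ε + 1) * (1 - s * τ) ^ ε / wfun i) ^ (1 + 1/ε)) / (1 + 1/ε)
        + τ * (Wbar * (1 - s * τ) ^ ε)) :
    (∀ i, ∀ s ∈ Set.Ioc (0:ℝ) 1, s * τ < 1 →
      HasDerivAt (fun t => chat i t)
        ((ε * τ ^ 2 / (1 - s * τ)) *
          (wfun i ^ (ε + 1) * (1 - s * τ) ^ ε * (1 - s) - Wbar * (1 - s * τ) ^ ε)) s) ∧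
    (τ < 1 → ∀ i,
      ((ε * τ ^ 2 / (1 - 1 * τ)) *
          (wfun i ^ (ε + 1) * (1 - 1 * τ) ^ ε * (1 - 1) - Wbar * (1 - 1 * τ) ^ ε))
        = -(ε * τ ^ 2 * (Wbar * (1 - τ) ^ ε)) / (1 - τ) ∧
      ((ε * τ ^ 2 / (1 - 1 * τ)) *
          (wfun i ^ (ε + 1) * (1 - 1 * τ) ^ ε * (1 - 1) - Wbar * (1 - 1 * τ) ^ ε)) < 0) := by
  have hεone : ε * (1 + 1/ε) = ε + 1 := by field_simp
  have hεden : (1:ℝ) + 1/ε ≠ 0 := by positivity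
  constructor
  · intro i s hs hsτ
    have hP : 0 < 1 - s * τ := by linarith
    set w := wfun i with hwdef
    have hwi : 0 < w := hw i
    -- the simplified function
    set g : ℝ → ℝ := fun t =>
      w ^ (ε + 1) * ((1 - t * τ) ^ ε * (1 - τ) - (1 - t * τ) ^ (ε + 1) / (1 + 1/ε))
        + τ * (Wbar * (1 - t * τ) ^ ε) with hg
    have hbase : HasDerivAt (fun t : ℝ => 1 - t * τ) (-τ) s := by
      simpa using ((hasDerivAt_id s).mul_const τ).const_sub 1
    have hd1 : HasDerivAt (fun t : ℝ => (1 - t * τ) ^ ε)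
        (ε * (1 - s * τ) ^ (ε - 1) * (-τ)) s := by
      have := hbase.rpow_const (p := ε) (Or.inl hP.ne')
      convert this using 1
      ring
    have hd2 : HasDerivAt (fun t : ℝ => (1 - t * τ) ^ (ε + 1))
        ((ε + 1) * (1 - s * τ) ^ (ε + 1 - 1) * (-τ)) s := by
      have := hbase.rpow_const (p := ε + 1) (Or.inl hP.ne')
      convert this using 1
      ring
    have hgd : HasDerivAt g
        (w ^ (ε + 1) * ((ε * (1 - s * τ) ^ (ε - 1) * (-τ)) * (1 - τ)
            - ((ε + 1) * (1 - s * τ) ^ (ε + 1 - 1) * (-τ)) / (1 + 1/ε))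
          + τ * (Wbar * (ε * (1 - s * τ) ^ (ε - 1) * (-τ)))) s := by
      exact (((hd1.mul_const (1 - τ)).sub (hd2.div_const (1 + 1/ε))).const_mul
        (w ^ (ε + 1))).add ((hd1.const_mul Wbar).const_mul τ)
    have heq : (fun t => chat i t) =ᶠ[nhds s] g := by
      have hcont : ContinuousAt (fun t : ℝ => 1 - t * τ) s := by fun_prop
      filter_upwards [hcont.eventually (eventually_gt_nhds hP)] with t ht
      have htP : (0:ℝ) < 1 - t * τ := ht
      have h1 : w ^ (ε + 1) * (1 - t * τ) ^ ε / w = w ^ ε * (1 - t * τ) ^ ε := by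
        rw [mul_comm, mul_div_assoc, ← Real.rpow_sub_one hwi.ne']
        ring_nf
      have h2 : (w ^ ε * (1 - t * τ) ^ ε) ^ (1 + 1/ε)
          = w ^ (ε + 1) * (1 - t * τ) ^ (ε + 1) := by
        rw [Real.mul_rpow (Real.rpow_nonneg hwi.le _) (Real.rpow_nonneg htP.le _),
          ← Real.rpow_mul hwi.le, ← Real.rpow_mul htP.le, hεone]
      rw [hchat, ← hwdef, h1, h2, hg]
      ring
    refine HasDerivAt.congr_of_eventuallyEq ?_ heq
    refine hgd.congr_deriv ?_
    have hPε : (1 - s * τ) ^ ε = (1 - s * τ) ^ (ε - 1) * (1 - s * τ) := by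
      rw [← Real.rpow_add_one hP.ne']; ring_nf
    have hP1 : (1 - s * τ) ^ (ε + 1 - 1) = (1 - s * τ) ^ ε := by norm_num
    rw [hP1, hPε]
    field_simp
    ring
  · intro hτ1 i
    have hP : (0:ℝ) < 1 - τ := by linarith
    have hWpos : 0 < Wbar := by
      rw [hW]
      have hc : (0:ℝ) < wfun 0 ^ (1 + ε) := Real.rpow_pos_of_pos (hw 0) _
      have hmono2 : MonotoneOn (fun j => wfun j ^ (1 + ε)) (Set.uIcc (0:ℝ) 1) := by
        intro a _ b _ hab
        exact Real.rpow_le_rpow (hw a).le (hmono hab) (by linarith)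
      have hint : IntervalIntegrable (fun j => wfun j ^ (1 + ε)) MeasureTheory.volume 0 1 :=
        hmono2.intervalIntegrable
      have hle : ∫ _ in (0:ℝ)..1, wfun 0 ^ (1 + ε) ≤ ∫ j in (0:ℝ)..1, wfun j ^ (1 + ε) := by
        refine intervalIntegral.integral_mono_on (by norm_num) intervalIntegrable_const hint ?_
        intro x hx
        exact Real.rpow_le_rpow (hw 0).le (hmono hx.1) (by linarith)
      have : ∫ _ in (0:ℝ)..1, wfun 0 ^ (1 + ε) = wfun 0 ^ (1 + ε) := by simp
      linarith
    constructor
    · field_simp; ring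
    · have heq : ((ε * τ ^ 2 / (1 - 1 * τ)) *
          (wfun i ^ (ε + 1) * (1 - 1 * τ) ^ ε * (1 - 1) - Wbar * (1 - 1 * τ) ^ ε))
          = -(ε * τ ^ 2 * (Wbar * (1 - τ) ^ ε)) / (1 - τ) := by
        field_simp
        ring
      rw [heq]
      have : 0 < ε * τ ^ 2 * (Wbar * (1 - τ) ^ ε) / (1 - τ) := by
        have := Real.rpow_pos_of_pos hP ε
        positivity
      linarith [this, neg_div (1 - τ) (ε * τ ^ 2 * (Wbar * (1 - τ) ^ ε))]
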